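/- Let G be a finite simple graph, let γ ≥ 1 be an integer, let α′ > 0, and let δ, μ be reals with 1 > δ > 1/γ + μ ≥ 2/γ > 0 and such that δ − μ is an integer multiple of 1/γ. Let O be a (γ, α′)-orientation of G. Then there exists a (γ, α′)-orientation O′ of G under which every vertex has the same load as under O, together with a (δ, μ)-refinement H′ of G with respect to O′ such that H′ is a forest (contains no cycle). -/

import Mathlib

namespace Stmt5Aux

open SimpleGraph
variable {V : Type*} [Fintype V] [DecidableEq V]
set_option linter.unusedSectionVars false

lemma walk_countP {G : SimpleGraph V} {a b : V} (p : G.Walk a b) (v : V) :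
    ((p.darts.countP (fun d => d.toProd.1 = v)) : ℝ)
      - p.darts.countP (fun d => d.toProd.2 = v)
    = (if a = v then 1 else 0) - (if b = v then 1 else 0) := by
  induction p with
  | nil => simp
  | @cons a a' b h q ih =>
    simp only [Walk.darts_cons, List.countP_cons, decide_eq_true_eq]
    push_cast
    split_ifs at * <;> linarith

lemma sum_count_fst (L : List (V × V)) (v : V) :
    ∑ u : V, ((L.count (v, u) : ℝ)) = L.countP (fun p => p.1 = v) := by
  induction L with
  | nil => simp
  | cons a L ih =>
    obtain ⟨a1, a2⟩ := a
    simp only [List.count_cons, List.countP_cons, decide_eq_true_eq, beq_iff_eq]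
    push_cast
    rw [Finset.sum_add_distrib, ih]
    congr 1
    by_cases h : a1 = v
    · subst h
      simp only [Prod.mk.injEq, true_and]
      rw [Finset.sum_ite_eq Finset.univ a2 (fun _ => (1:ℝ))]
      simp
    · rw [if_neg h, Finset.sum_eq_zero]
      intro u _
      rw [if_neg]
      exact fun hh => h (congrArg Prod.fst hh)

lemma sum_count_snd (L : List (V × V)) (v : V) :
    ∑ u : V, ((L.count (u, v) : ℝ)) = L.countP (fun p => p.2 = v) := by
  induction L with
  | nil => simp
  | cons a L ih =>
    obtain ⟨a1, a2⟩ := a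
    simp only [List.count_cons, List.countP_cons, decide_eq_true_eq, beq_iff_eq]
    push_cast
    rw [Finset.sum_add_distrib, ih]
    congr 1
    by_cases h : a2 = v
    · subst h
      simp only [Prod.mk.injEq, and_true]
      rw [Finset.sum_ite_eq Finset.univ a1 (fun _ => (1:ℝ))]
      simp
    · rw [if_neg h, Finset.sum_eq_zero]
      intro u _
      rw [if_neg]
      exact fun hh => h (congrArg Prod.snd hh)

lemma count_eq_one' {α : Type*} [BEq α] [LawfulBEq α] {l : List α} (h : l.Nodup) {a : α}
    (ha : a ∈ l) : l.count a = 1 := by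
  induction l with
  | nil => simp at ha
  | cons b l ih =>
    rw [List.count_cons]
    rcases List.mem_cons.1 ha with rfl | hmem
    · simp [List.count_eq_zero_of_not_mem (List.nodup_cons.1 h).1]
    · have hb : ¬ (b == a) = true := by
        intro hh
        exact (List.nodup_cons.1 h).1 ((eq_of_beq hh).symm ▸ hmem)
      rw [ih (List.nodup_cons.1 h).2 hmem, if_neg hb]

def midG (G : SimpleGraph V) (δ : ℝ) (X : V → V → ℝ) : SimpleGraph V where
  Adj u v := G.Adj u v ∧ X u v ∈ Set.Ioo δ (1-δ) ∧ X v u ∈ Set.Ioo δ (1-δ)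
  symm := ⟨fun _ _ ⟨h1, h2, h3⟩ => ⟨h1.symm, h3, h2⟩⟩
  loopless := ⟨fun v h => G.loopless.irrefl v h.1⟩

def midS (G : SimpleGraph V) (δ : ℝ) (X : V → V → ℝ) : Set (V × V) :=
  {p | (midG G δ X).Adj p.1 p.2}

lemma aux5 (G : SimpleGraph V) (γ : ℕ) (hγ : 1 ≤ γ) (α' : ℝ)
    (δ μ : ℝ) (hδ1 : δ < 1) (hδ2 : 1/(γ:ℝ) + μ < δ) (hμ : 2/(γ:ℝ) ≤ 1/(γ:ℝ) + μ) :
    ∀ n (X : V → V → ℝ),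
      (∀ u v, ¬ G.Adj u v → X u v = 0) →
      (∀ u v, G.Adj u v → 0 ≤ X u v ∧ X u v ≤ 1) →
      (∀ u v, G.Adj u v → X u v + X v u = 1) →
      (∀ u v, G.Adj u v → ∃ m : ℤ, X u v = (m:ℝ)/γ) →
      (∀ v, ∑ u, X v u ≤ α') →
      (midS G δ X).ncard = n →
      ∃ (X' : V → V → ℝ) (H' : SimpleGraph V),
        (∀ u v, ¬ G.Adj u v → X' u v = 0) ∧
        (∀ u v, G.Adj u v → 0 ≤ X' u v ∧ X' u v ≤ 1) ∧
        (∀ u v, G.Adj u v → X' u v + X' v u = 1) ∧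
        (∀ u v, G.Adj u v → ∃ m : ℤ, X' u v = (m:ℝ)/γ) ∧
        (∀ v, ∑ u, X' v u ≤ α') ∧
        (∀ v, ∑ u, X' v u = ∑ u, X v u) ∧
        H' ≤ G ∧
        (∀ u v, G.Adj u v → X' u v ∈ Set.Ioo δ (1-δ) → X' v u ∈ Set.Ioo δ (1-δ) → H'.Adj u v) ∧
        (∀ u v, H'.Adj u v → X' u v ∈ Set.Icc (δ-μ) (1-δ+μ)) ∧
        H'.IsAcyclic := by
  have hγ0 : (0:ℝ) < γ := by positivity
  have hγ1 : (0:ℝ) < 1/γ := by positivity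
  have h1γμ : 1/(γ:ℝ) ≤ μ := by
    have : (2:ℝ)/γ - 1/γ = 1/γ := by ring
    linarith
  have hδγ : 1/(γ:ℝ) < δ := by linarith
  intro n
  induction n using Nat.strong_induction_on with
  | _ n IH =>
    intro X hX0 hX1 hXsum hXγ hXload hn
    by_cases hac : (midG G δ X).IsAcyclic
    · refine ⟨X, midG G δ X, hX0, hX1, hXsum, hXγ, hXload, fun v => rfl, ?_, ?_, ?_, hac⟩
      · intro u v h; exact h.1
      · intro u v h h1 h2; exact ⟨h, h1, h2⟩
      · intro u v h
        exact ⟨by linarith [h.2.1.1], by linarith [h.2.1.2]⟩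
    · set M := midG G δ X with hM
      simp only [SimpleGraph.IsAcyclic, not_forall, not_not] at hac
      obtain ⟨v0, c, hc⟩ := hac
      set L : List (V × V) := c.darts.map SimpleGraph.Dart.toProd with hLdef
      have hdnd : c.darts.Nodup := by
        have := hc.isTrail.edges_nodup
        rw [SimpleGraph.Walk.edges] at this
        exact this.of_map _
      have hLnd : L.Nodup := hdnd.map (fun d1 d2 h => SimpleGraph.Dart.ext d1 d2 h)
      have hmemAdj : ∀ p ∈ L, M.Adj p.1 p.2 := by
        intro p hp
        obtain ⟨d, hd, rfl⟩ := List.mem_map.1 hp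
        exact d.adj
      have hnotboth : ∀ u v : V, (u, v) ∈ L → (v, u) ∉ L := by
        intro u v h1 h2
        obtain ⟨d1, hd1, he1⟩ := List.mem_map.1 h1
        obtain ⟨d2, hd2, he2⟩ := List.mem_map.1 h2
        have hne : u ≠ v := (hmemAdj _ h1).ne
        have hedge : d1.edge = d2.edge := by
          simp only [SimpleGraph.Dart.edge, he1, he2, Sym2.eq_swap]
        have : d1 = d2 := by
          have hinj := List.inj_on_of_nodup_map (f := SimpleGraph.Dart.edge)
            (l := c.darts) (by rw [← SimpleGraph.Walk.edges]; exact hc.isTrail.edges_nodup)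
          exact hinj hd1 hd2 hedge
        rw [this, he2] at he1
        exact hne (congrArg Prod.fst he1).symm
      -- L is nonempty; pick a maximizer of X over L
      have hLne : ∃ p, p ∈ L := by
        have h3 := hc.three_le_length
        have : 0 < c.darts.length := by
          rw [SimpleGraph.Walk.length_darts]; omega
        obtain ⟨d, hd⟩ := List.exists_mem_of_length_pos this
        exact ⟨d.toProd, List.mem_map.2 ⟨d, hd, rfl⟩⟩
      have hSne : L.toFinset.Nonempty := by
        obtain ⟨p, hp⟩ := hLne; exact ⟨p, List.mem_toFinset.2 hp⟩
      obtain ⟨pm, hpmS, hpmmax⟩ :=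
        Finset.exists_max_image L.toFinset (fun p => X p.1 p.2) hSne
      have hpmL : pm ∈ L := List.mem_toFinset.1 hpmS
      have hmax : ∀ p ∈ L, X p.1 p.2 ≤ X pm.1 pm.2 := fun p hp =>
        hpmmax p (List.mem_toFinset.2 hp)
      set a : ℝ := X pm.1 pm.2 with ha
      have hamid : M.Adj pm.1 pm.2 := hmemAdj pm hpmL
      have ha1 : δ < a := hamid.2.1.1
      have ha2 : a < 1 - δ := hamid.2.1.2
      -- choose the rotation amount
      set k : ℤ := ⌈(γ:ℝ) * (1 - δ - a)⌉ with hk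
      have hk1 : 1 ≤ k := by
        have : (0:ℤ) < k := Int.ceil_pos.2 (by nlinarith)
        omega
      set ε : ℝ := (k:ℝ)/γ with hε
      have hε0 : 0 < ε := by
        rw [hε]
        have : (0:ℝ) < (k:ℝ) := by exact_mod_cast hk1
        positivity
      have hεlow : 1 - δ ≤ a + ε := by
        have hle := Int.le_ceil ((γ:ℝ) * (1 - δ - a))
        rw [hε, hk, ← sub_le_iff_le_add', le_div_iff₀ hγ0]
        nlinarith
      have hεhigh : a + ε < 1 - δ + 1/γ := by
        have hcl := Int.ceil_lt_add_one ((γ:ℝ) * (1 - δ - a))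
        have : ε < (1 - δ - a) + 1/γ := by
          rw [hε, hk, div_lt_iff₀ hγ0]
          calc ((⌈(γ:ℝ) * (1 - δ - a)⌉ : ℝ)) < (γ:ℝ) * (1 - δ - a) + 1 := hcl
            _ = (1 - δ - a + 1/γ) * γ := by field_simp
        linarith
      -- the rotated orientation
      set Y : V → V → ℝ :=
        (fun u v => X u v + ε * ((L.count (u,v) : ℝ) - (L.count (v,u) : ℝ))) with hYdef
      have htri : ∀ u v : V, (L.count (u,v) = 0 ∧ L.count (v,u) = 0) ∨
          ((u,v) ∈ L ∧ L.count (u,v) = 1 ∧ L.count (v,u) = 0) ∨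
          ((v,u) ∈ L ∧ L.count (u,v) = 0 ∧ L.count (v,u) = 1) := by
        intro u v
        by_cases h1 : (u,v) ∈ L
        · exact Or.inr (Or.inl ⟨h1, count_eq_one' hLnd h1,
            List.count_eq_zero_of_not_mem (hnotboth u v h1)⟩)
        by_cases h2 : (v,u) ∈ L
        · exact Or.inr (Or.inr ⟨h2, List.count_eq_zero_of_not_mem h1,
            count_eq_one' hLnd h2⟩)
        · exact Or.inl ⟨List.count_eq_zero_of_not_mem h1, List.count_eq_zero_of_not_mem h2⟩
      have hY0' : ∀ u v, ¬ G.Adj u v → Y u v = 0 := by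
        intro u v h
        have h1 : (u,v) ∉ L := fun hh => h (hmemAdj _ hh).1
        have h2 : (v,u) ∉ L := fun hh => h ((hmemAdj _ hh).1).symm
        simp [hYdef, List.count_eq_zero_of_not_mem h1, List.count_eq_zero_of_not_mem h2,
          hX0 u v h]
      have hY1' : ∀ u v, G.Adj u v → 0 ≤ Y u v ∧ Y u v ≤ 1 := by
        intro u v hadj
        rcases htri u v with ⟨h1, h2⟩ | ⟨hmemL, h1, h2⟩ | ⟨hmemL, h1, h2⟩
        · have e1 : Y u v = X u v := by simp [hYdef, h1, h2]
          rw [e1]; exact hX1 u v hadj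
        · have e1 : Y u v = X u v + ε := by simp [hYdef, h1, h2]
          have hXa := hmax (u,v) hmemL
          have h0 := hX1 u v hadj
          rw [e1]
          constructor <;> linarith [h0.1, hXa, hεhigh, hδγ]
        · have e1 : Y u v = X u v - ε := by simp [hYdef, h1, h2]; ring
          have hXa := hmax (v,u) hmemL
          have hs := hXsum u v hadj
          have h0 := hX1 u v hadj
          rw [e1]
          constructor <;> linarith [hXa, hεhigh, hδγ, h0.2]
      have hYsum' : ∀ u v, G.Adj u v → Y u v + Y v u = 1 := by
        intro u v hadj
        have h1 : Y u v + Y v u = X u v + X v u := by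
          simp only [hYdef]; ring
        rw [h1]; exact hXsum u v hadj
      have hYγ' : ∀ u v, G.Adj u v → ∃ m : ℤ, Y u v = (m:ℝ)/γ := by
        intro u v hadj
        obtain ⟨m, hm⟩ := hXγ u v hadj
        refine ⟨m + k * ((L.count (u,v) : ℤ) - (L.count (v,u) : ℤ)), ?_⟩
        simp only [hYdef, hm, hε]
        push_cast
        field_simp
      have hloadeq : ∀ v, ∑ u, Y v u = ∑ u, X v u := by
        intro v
        have h1 : ∑ u, Y v u
            = (∑ u, X v u) + ε * ((∑ u, (L.count (v,u):ℝ)) - ∑ u, (L.count (u,v):ℝ)) := by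
          simp only [hYdef]
          rw [Finset.sum_add_distrib]
          congr 1
          rw [← Finset.mul_sum]
          congr 1
          exact Finset.sum_sub_distrib _ _
        rw [h1, sum_count_fst, sum_count_snd]
        have h2 : ((L.countP (fun p => p.1 = v) : ℝ)) - L.countP (fun p => p.2 = v) = 0 := by
          rw [hLdef, List.countP_map, List.countP_map]
          have h3 := walk_countP c v
          simpa [Function.comp_def] using h3
        nlinarith [h2]
      have hYload' : ∀ v, ∑ u, Y v u ≤ α' := fun v => (hloadeq v).le.trans (hXload v)
      -- the middle set strictly shrinks
      have hsub : midS G δ Y ⊆ midS G δ X := by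
        rintro ⟨u, v⟩ hmem
        rcases htri u v with ⟨h1, h2⟩ | ⟨hmemL, h1, h2⟩ | ⟨hmemL, h1, h2⟩
        · have e1 : Y u v = X u v := by
            simp [hYdef, h1, h2]
          have e2 : Y v u = X v u := by
            simp [hYdef, h1, h2]
          exact ⟨hmem.1, e1 ▸ hmem.2.1, e2 ▸ hmem.2.2⟩
        · exact hmemAdj _ hmemL
        · exact (hmemAdj _ hmemL).symm
      have hmemX : pm ∈ midS G δ X := hamid
      have hnmemY : pm ∉ midS G δ Y := by
        intro hmem
        have h1 : L.count (pm.1, pm.2) = 1 := by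
          rw [Prod.mk.eta]; exact count_eq_one' hLnd hpmL
        have h2 : L.count (pm.2, pm.1) = 0 := by
          apply List.count_eq_zero_of_not_mem
          intro hh
          exact hnotboth pm.2 pm.1 hh (by rwa [Prod.mk.eta])
        have e1 : Y pm.1 pm.2 = a + ε := by
          simp [hYdef, h1, h2, ha]
        have := hmem.2.1.2
        rw [e1] at this
        linarith
      have hlt : (midS G δ Y).ncard < n := by
        rw [← hn]
        exact Set.ncard_lt_ncard
          ((Set.ssubset_iff_of_subset hsub).2 ⟨pm, hmemX, hnmemY⟩) (Set.toFinite _)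
      obtain ⟨X', H', p1, p2, p3, p4, p5, p6, p7, p8, p9, p10⟩ :=
        IH _ hlt Y hY0' hY1' hYsum' hYγ' hYload' rfl
      exact ⟨X', H', p1, p2, p3, p4, p5,
        fun v => (p6 v).trans (hloadeq v), p7, p8, p9, p10⟩

end Stmt5Aux

/-- Given a `(γ, α′)`-orientation `O` of `G` and parameters
`1 > δ > 1/γ + μ ≥ 2/γ > 0` with `δ - μ` an integer multiple of `1/γ`, there exists a
`(γ, α′)`-orientation `O′` with the same vertex loads as `O` together with a `(δ, μ)`-refinement
`H′` of `G` with respect to `O′` that is a forest. -/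
theorem stmt_5 {V : Type*} [Fintype V] [DecidableEq V]
    (G : SimpleGraph V)
    (γ : ℕ) (hγ : 1 ≤ γ)
    (α' : ℝ) (hα' : 0 < α')
    (δ μ : ℝ)
    (hδ1 : δ < 1) (hδ2 : 1 / (γ : ℝ) + μ < δ) (hμ : 2 / (γ : ℝ) ≤ 1 / (γ : ℝ) + μ)
    (hδμ : ∃ m : ℤ, δ - μ = (m : ℝ) / γ)
    (X : V → V → ℝ)
    (hX0 : ∀ u v, ¬ G.Adj u v → X u v = 0)
    (hX1 : ∀ u v, G.Adj u v → 0 ≤ X u v ∧ X u v ≤ 1)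
    (hXsum : ∀ u v, G.Adj u v → X u v + X v u = 1)
    (hXγ : ∀ u v, G.Adj u v → ∃ m : ℤ, X u v = (m : ℝ) / γ)
    (hXload : ∀ v, ∑ u, X v u ≤ α') :
    ∃ (X' : V → V → ℝ) (H' : SimpleGraph V),
      (∀ u v, ¬ G.Adj u v → X' u v = 0) ∧
      (∀ u v, G.Adj u v → 0 ≤ X' u v ∧ X' u v ≤ 1) ∧
      (∀ u v, G.Adj u v → X' u v + X' v u = 1) ∧
      (∀ u v, G.Adj u v → ∃ m : ℤ, X' u v = (m : ℝ) / γ) ∧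
      (∀ v, ∑ u, X' v u ≤ α') ∧
      (∀ v, ∑ u, X' v u = ∑ u, X v u) ∧
      H' ≤ G ∧
      (∀ u v, G.Adj u v → X' u v ∈ Set.Ioo δ (1 - δ) → X' v u ∈ Set.Ioo δ (1 - δ) →
        H'.Adj u v) ∧
      (∀ u v, H'.Adj u v → X' u v ∈ Set.Icc (δ - μ) (1 - δ + μ)) ∧
      H'.IsAcyclic := by
  exact Stmt5Aux.aux5 G γ hγ α' δ μ hδ1 hδ2 hμ _ X hX0 hX1 hXsum hXγ hXload rfl
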